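/- Let {|a_{s,1}⟩⊗|a_{s,2}⟩⊗|a_{s,3}⟩⊗|a_{s,4}⟩ : s = 1,...,16} be an orthogonal product basis of (ℂ²)^{⊗4}. For each factor i ∈ {1,2,3,4}, let μ_i be the maximum over lines V ⊆ ℂ² of the multiplicity |{s : [a_{s,i}] = V}|. Then max(μ_1, μ_2, μ_3, μ_4) ≥ 4. -/

import Mathlib

/-- Concrete tensor product of `n` qubit vectors. -/
noncomputable def qvec {n : ℕ} (a : Fin n → EuclideanSpace ℂ (Fin 2)) :
    EuclideanSpace ℂ (Fin n → Fin 2) :=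
  WithLp.toLp 2 (fun f => ∏ k, a k (f k))

lemma inner_qvec {n : ℕ} (u v : Fin n → EuclideanSpace ℂ (Fin 2)) :
    (inner ℂ (qvec u) (qvec v) : ℂ) = ∏ k, (inner ℂ (u k) (v k) : ℂ) := by
  simp only [qvec, PiLp.inner_apply, PiLp.toLp_apply, RCLike.inner_apply, map_prod, ← Finset.prod_mul_distrib]
  rw [Finset.prod_univ_sum]
  simp [Fintype.piFinset_univ]

lemma span_eq_orth {u v : EuclideanSpace ℂ (Fin 2)} (hu : ‖u‖ = 1) (hv : ‖v‖ = 1)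
    (h : (inner ℂ u v : ℂ) = 0) : (ℂ ∙ v) = (ℂ ∙ u)ᗮ := by
  have hu0 : u ≠ 0 := by intro h0; simp [h0] at hu
  have hv0 : v ≠ 0 := by intro h0; simp [h0] at hv
  have hle : (ℂ ∙ v) ≤ (ℂ ∙ u)ᗮ := by
    rw [Submodule.span_singleton_le_iff_mem, Submodule.mem_orthogonal_singleton_iff_inner_right]
    exact h
  refine Submodule.eq_of_le_of_finrank_eq hle ?_
  have h1 : Module.finrank ℂ (ℂ ∙ v : Submodule ℂ (EuclideanSpace ℂ (Fin 2))) = 1 :=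
    finrank_span_singleton hv0
  have h2 : Module.finrank ℂ (ℂ ∙ u : Submodule ℂ (EuclideanSpace ℂ (Fin 2))) = 1 :=
    finrank_span_singleton hu0
  have h3 := Submodule.finrank_add_finrank_orthogonal (K := (ℂ ∙ u : Submodule ℂ (EuclideanSpace ℂ (Fin 2))))
  simp [h2, finrank_euclideanSpace] at h3
  omega

/-- For every orthogonal product basis of four qubits, some tensor factor `i` contains a line
of multiplicity at least `4`, i.e. `max (μ₁, μ₂, μ₃, μ₄) ≥ 4`. -/
theorem stmt14
    (a : Fin 16 → Fin 4 → EuclideanSpace ℂ (Fin 2))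
    (ha : ∀ s i, ‖a s i‖ = 1)
    (honb : Orthonormal ℂ (fun s => qvec (a s)))
    (hspan : Submodule.span ℂ (Set.range fun s => qvec (a s)) = ⊤) :
    ∃ i : Fin 4, ∃ s : Fin 16,
      4 ≤ {t | (ℂ ∙ a t i : Submodule ℂ (EuclideanSpace ℂ (Fin 2))) = ℂ ∙ a s i}.ncard := by
  -- for each t ≠ 0, some coordinate i with ⟪a 0 i, a t i⟫ = 0
  have key : ∀ t : Fin 16, t ≠ 0 → ∃ i, (inner ℂ (a 0 i) (a t i) : ℂ) = 0 := by
    intro t ht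
    have h2 : (inner ℂ (qvec (a 0)) (qvec (a t)) : ℂ) = 0 := honb.2 (Ne.symm ht)
    rw [inner_qvec] at h2
    exact Finset.prod_eq_zero_iff.mp h2 |>.imp (fun i h => h.2)
  classical
  set s0 : Finset (Fin 16) := Finset.univ.erase 0 with hs0
  choose g hg using fun t (ht : t ∈ s0) =>
    key t (Finset.mem_erase.mp ht).1
  let G : Fin 16 → Fin 4 := fun t => if h : t ∈ s0 then g t h else 0
  have hmaps : ∀ t ∈ s0, G t ∈ (Finset.univ : Finset (Fin 4)) := fun _ _ => Finset.mem_univ _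
  have hcard : (Finset.univ : Finset (Fin 4)).card * 3 < s0.card := by
    simp [hs0]
  obtain ⟨i, -, hi⟩ := Finset.exists_lt_card_fiber_of_mul_lt_card_of_maps_to hmaps hcard
  refine ⟨i, ?_⟩
  set F : Finset (Fin 16) := {x ∈ s0 | G x = i} with hF
  obtain ⟨s, hs⟩ := Finset.card_pos.mp (by omega : 0 < F.card)
  refine ⟨s, ?_⟩
  have horth : ∀ t ∈ F, (ℂ ∙ a t i) = (ℂ ∙ a 0 i)ᗮ := by
    intro t htF
    rw [hF, Finset.mem_filter] at htF
    obtain ⟨hts, hGi⟩ := htF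
    have := hg t hts
    rw [show g t hts = G t by simp [G, hts], hGi] at this
    exact span_eq_orth (ha 0 i) (ha t i) this
  have hsub : (F : Set (Fin 16)) ⊆
      {t | (ℂ ∙ a t i : Submodule ℂ (EuclideanSpace ℂ (Fin 2))) = ℂ ∙ a s i} := by
    intro t ht
    simp only [Set.mem_setOf_eq]
    rw [horth t ht, horth s hs]
  calc (4 : ℕ) ≤ F.card := by omega
    _ = (F : Set (Fin 16)).ncard := (Set.ncard_coe_finset F).symm
    _ ≤ _ := Set.ncard_le_ncard hsub (Set.toFinite _)
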